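/- Let a, x > 0 and 0 < φ₁ ≤ φ₂, and let φ : [0,∞) → ℝ be continuous with φ₁ ≤ φ ≤ φ₂. Set n(t) = 1 + x ∫_0^t φ(s)e^{as} ds, and let M : [0,∞) → ℝ satisfy M(t) = 1 + x ∫_0^t φ(s)e^{as}(2n(s) + 1) ds. Then for all t ≥ 0, M(t) ≤ (e^{2at}/a²)·(a² + φ₂x(a + 2φ₂x) + φ₂²x²). -/

import Mathlib

theorem stmt16 (a x φ₁ φ₂ : ℝ) (ha : 0 < a) (hx : 0 < x) (hφ₁ : 0 < φ₁)
    (hφ₁₂ : φ₁ ≤ φ₂) (φ : ℝ → ℝ) (hcont : Continuous φ)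
    (hbd : ∀ r, 0 ≤ r → φ₁ ≤ φ r ∧ φ r ≤ φ₂)
    (M : ℝ → ℝ)
    (hM : ∀ t, 0 ≤ t → M t = 1 + x * ∫ s in (0:ℝ)..t,
      φ s * Real.exp (a * s) * (2 * (1 + x * ∫ r in (0:ℝ)..s, φ r * Real.exp (a * r)) + 1)) :
    ∀ t, 0 ≤ t →
      M t ≤ (Real.exp (2 * a * t) / a ^ 2) *
        (a ^ 2 + φ₂ * x * (a + 2 * φ₂ * x) + φ₂ ^ 2 * x ^ 2) := by
  have hφ₂ : 0 < φ₂ := lt_of_lt_of_le hφ₁ hφ₁₂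
  -- exp integral formula
  have hexpInt : ∀ (b : ℝ) (c : ℝ), c ≠ 0 →
      (∫ s in (0:ℝ)..b, Real.exp (c * s)) = (Real.exp (c * b) - 1) / c := by
    intro b c hc
    have h : ∀ s ∈ Set.uIcc (0:ℝ) b, HasDerivAt (fun u => Real.exp (c * u) / c)
        (Real.exp (c * s)) s := by
      intro s _
      have h1 : HasDerivAt (fun u : ℝ => c * u) c s := by
        simpa using (hasDerivAt_id s).const_mul c
      have h2 := h1.exp
      have h3 := h2.div_const c
      simpa [mul_comm, mul_div_assoc, mul_div_cancel_left₀ _ hc] using h3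
    have hint : IntervalIntegrable (fun s => Real.exp (c * s)) MeasureTheory.volume 0 b :=
      (Real.continuous_exp.comp (continuous_const.mul continuous_id)).intervalIntegrable _ _
    have := intervalIntegral.integral_eq_sub_of_hasDerivAt h hint
    simp only [mul_zero, Real.exp_zero] at this
    rw [this]; ring
  have hce : Continuous fun s => φ s * Real.exp (a * s) :=
    hcont.mul (Real.continuous_exp.comp (continuous_const.mul continuous_id))
  -- bound on n
  have hn_le : ∀ s : ℝ, 0 ≤ s →
      (1 + x * ∫ r in (0:ℝ)..s, φ r * Real.exp (a * r)) ≤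
        1 + (φ₂ * x / a) * Real.exp (a * s) := by
    intro s hs
    have hmono : (∫ r in (0:ℝ)..s, φ r * Real.exp (a * r)) ≤
        ∫ r in (0:ℝ)..s, φ₂ * Real.exp (a * r) := by
      apply intervalIntegral.integral_mono_on hs
        (hce.intervalIntegrable _ _)
        ((continuous_const.mul (Real.continuous_exp.comp
          (continuous_const.mul continuous_id))).intervalIntegrable _ _)
      intro r hr
      have := (hbd r hr.1).2
      exact mul_le_mul_of_nonneg_right this (Real.exp_nonneg _)
    have heq : (∫ r in (0:ℝ)..s, φ₂ * Real.exp (a * r)) =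
        φ₂ * ((Real.exp (a * s) - 1) / a) := by
      rw [intervalIntegral.integral_const_mul, hexpInt s a ha.ne']
    have h3 : x * (φ₂ * ((Real.exp (a * s) - 1) / a)) ≤ φ₂ * x / a * Real.exp (a * s) := by
      rw [show x * (φ₂ * ((Real.exp (a * s) - 1) / a)) = φ₂ * x * (Real.exp (a * s) - 1) / a by
            ring,
          show φ₂ * x / a * Real.exp (a * s) = φ₂ * x * Real.exp (a * s) / a by ring]
      gcongr
      linarith
    have h4 := mul_le_mul_of_nonneg_left (hmono.trans_eq heq) hx.le
    linarith
  have hn_ge : ∀ s : ℝ, 0 ≤ s →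
      (1:ℝ) ≤ 1 + x * ∫ r in (0:ℝ)..s, φ r * Real.exp (a * r) := by
    intro s hs
    have hpos : 0 ≤ ∫ r in (0:ℝ)..s, φ r * Real.exp (a * r) := by
      apply intervalIntegral.integral_nonneg hs
      intro r hr
      exact mul_nonneg (le_of_lt (lt_of_lt_of_le hφ₁ (hbd r hr.1).1)) (Real.exp_nonneg _)
    nlinarith
  intro t ht
  rw [hM t ht]
  -- continuity of integrand
  have hcn : Continuous fun s => (1 + x * ∫ r in (0:ℝ)..s, φ r * Real.exp (a * r)) := by
    have : Continuous fun s => ∫ r in (0:ℝ)..s, φ r * Real.exp (a * r) :=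
      intervalIntegral.continuous_primitive (fun a b => hce.intervalIntegrable a b) 0
    exact continuous_const.add (continuous_const.mul this)
  have hcf : Continuous fun s => φ s * Real.exp (a * s) *
      (2 * (1 + x * ∫ r in (0:ℝ)..s, φ r * Real.exp (a * r)) + 1) :=
    hce.mul ((continuous_const.mul hcn).add continuous_const)
  have hcg : Continuous fun s => φ₂ * Real.exp (a * s) *
      (2 * (1 + (φ₂ * x / a) * Real.exp (a * s)) + 1) := by
    have he : Continuous fun s : ℝ => Real.exp (a * s) :=
      Real.continuous_exp.comp (continuous_const.mul continuous_id)
    exact (continuous_const.mul he).mul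
      ((continuous_const.mul (continuous_const.add (continuous_const.mul he))).add
        continuous_const)
  have hmono2 : (∫ s in (0:ℝ)..t, φ s * Real.exp (a * s) *
        (2 * (1 + x * ∫ r in (0:ℝ)..s, φ r * Real.exp (a * r)) + 1)) ≤
      ∫ s in (0:ℝ)..t, φ₂ * Real.exp (a * s) *
        (2 * (1 + (φ₂ * x / a) * Real.exp (a * s)) + 1) := by
    apply intervalIntegral.integral_mono_on ht (hcf.intervalIntegrable _ _)
      (hcg.intervalIntegrable _ _)
    intro s hs
    have h1 := hn_le s hs.1
    have h2 := hn_ge s hs.1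
    have hφs := (hbd s hs.1)
    have hφs0 : 0 ≤ φ s := le_of_lt (lt_of_lt_of_le hφ₁ hφs.1)
    have hexps : (0:ℝ) < Real.exp (a * s) := Real.exp_pos _
    have hb : 2 * (1 + x * ∫ r in (0:ℝ)..s, φ r * Real.exp (a * r)) + 1 ≤
        2 * (1 + (φ₂ * x / a) * Real.exp (a * s)) + 1 := by linarith
    have hb0 : 0 ≤ 2 * (1 + x * ∫ r in (0:ℝ)..s, φ r * Real.exp (a * r)) + 1 := by linarith
    calc φ s * Real.exp (a * s) *
          (2 * (1 + x * ∫ r in (0:ℝ)..s, φ r * Real.exp (a * r)) + 1)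
        ≤ φ₂ * Real.exp (a * s) *
          (2 * (1 + x * ∫ r in (0:ℝ)..s, φ r * Real.exp (a * r)) + 1) := by
          apply mul_le_mul_of_nonneg_right _ hb0
          exact mul_le_mul_of_nonneg_right hφs.2 hexps.le
      _ ≤ _ := by
          apply mul_le_mul_of_nonneg_left hb
          positivity
  -- compute the upper integral
  have hval : (∫ s in (0:ℝ)..t, φ₂ * Real.exp (a * s) *
        (2 * (1 + (φ₂ * x / a) * Real.exp (a * s)) + 1)) =
      3 * φ₂ * ((Real.exp (a * t) - 1) / a) +
        (2 * φ₂ ^ 2 * x / a) * ((Real.exp (2 * a * t) - 1) / (2 * a)) := by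
    have hrw : ∀ s : ℝ, φ₂ * Real.exp (a * s) *
        (2 * (1 + (φ₂ * x / a) * Real.exp (a * s)) + 1) =
        3 * φ₂ * Real.exp (a * s) + (2 * φ₂ ^ 2 * x / a) * Real.exp (2 * a * s) := by
      intro s
      have : Real.exp (2 * a * s) = Real.exp (a * s) * Real.exp (a * s) := by
        rw [← Real.exp_add]; ring_nf
      rw [this]; field_simp; ring
    simp only [hrw]
    rw [intervalIntegral.integral_add, intervalIntegral.integral_const_mul,
      intervalIntegral.integral_const_mul, hexpInt t a ha.ne',
      hexpInt t (2 * a) (by positivity)]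
    · exact (continuous_const.mul (Real.continuous_exp.comp
        (continuous_const.mul continuous_id))).intervalIntegrable _ _
    · exact (continuous_const.mul (Real.continuous_exp.comp
        (continuous_const.mul continuous_id))).intervalIntegrable _ _
  rw [hval] at hmono2
  have hfin : 1 + x * (3 * φ₂ * ((Real.exp (a * t) - 1) / a) +
      (2 * φ₂ ^ 2 * x / a) * ((Real.exp (2 * a * t) - 1) / (2 * a))) ≤
      (Real.exp (2 * a * t) / a ^ 2) *
        (a ^ 2 + φ₂ * x * (a + 2 * φ₂ * x) + φ₂ ^ 2 * x ^ 2) := by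
    have hE : (1:ℝ) ≤ Real.exp (a * t) := Real.one_le_exp (by positivity)
    have hE2 : Real.exp (2 * a * t) = Real.exp (a * t) * Real.exp (a * t) := by
      rw [← Real.exp_add]; ring_nf
    rw [hE2]
    set E := Real.exp (a * t) with hEdef
    have ha2 : (0:ℝ) < a ^ 2 := by positivity
    have key : 0 ≤ a ^ 2 * (E ^ 2 - 1) + φ₂ * x * a * (E ^ 2 - 3 * E + 3) +
        φ₂ ^ 2 * x ^ 2 * (2 * E ^ 2 + 1) := by
      have h1 : 0 ≤ E ^ 2 - 1 := by nlinarith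
      have h2 : 0 ≤ E ^ 2 - 3 * E + 3 := by nlinarith [sq_nonneg (E - 3/2)]
      have h3 : 0 ≤ 2 * E ^ 2 + 1 := by positivity
      positivity
    have hLHS : 1 + x * (3 * φ₂ * ((E - 1) / a) +
        2 * φ₂ ^ 2 * x / a * ((E * E - 1) / (2 * a))) =
        (a ^ 2 + 3 * φ₂ * x * a * (E - 1) + φ₂ ^ 2 * x ^ 2 * (E * E - 1)) / a ^ 2 := by
      field_simp
      ring
    rw [hLHS, div_mul_eq_mul_div, div_le_div_iff₀ ha2 ha2]
    nlinarith [key, mul_pos ha2 ha2]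
  calc 1 + x * (∫ s in (0:ℝ)..t, φ s * Real.exp (a * s) *
        (2 * (1 + x * ∫ r in (0:ℝ)..s, φ r * Real.exp (a * r)) + 1))
      ≤ 1 + x * (3 * φ₂ * ((Real.exp (a * t) - 1) / a) +
        (2 * φ₂ ^ 2 * x / a) * ((Real.exp (2 * a * t) - 1) / (2 * a))) := by
        exact add_le_add le_rfl (mul_le_mul_of_nonneg_left hmono2 hx.le)
    _ ≤ _ := hfin
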